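/- arXiv:1511.04349 — 2 statements merged into one kernel-verified Lean document; each statement's English description precedes it below -/
import Mathlib

section
/- Let N ≥ 3, and consider the recursion p_{n+1} = N p_n/(2(N - p_n)) with initial value p₀ > N/2 (and p₀ < 3N/4). Then there exists a natural number n such that either p_n ≥ 3N/4 or p_n ≥ N at some step; i.e., the sequence, as long as it stays below 3N/4, reaches 3N/4 in finitely many steps. -/
theorem stmt7 (N : ℕ) (hN : 3 ≤ N) (p : ℕ → ℝ)
    (h0 : (N : ℝ) / 2 < p 0) (h0' : p 0 < 3 * N / 4)
    (hrec : ∀ n, p (n + 1) = N * p n / (2 * (N - p n))) :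
    ∃ n, 3 * (N : ℝ) / 4 ≤ p n ∨ (N : ℝ) ≤ p n := by
  by_contra h
  push_neg at h
  have hN' : (3 : ℝ) ≤ N := by exact_mod_cast hN
  have hNpos : (0 : ℝ) < N := by linarith
  have hp0pos : 0 < p 0 := by linarith
  have hden0 : (0 : ℝ) < 2 * (N - p 0) := by linarith
  have hr1 : (1 : ℝ) < N / (2 * (N - p 0)) := by
    rw [lt_div_iff₀ hden0]; linarith
  set r : ℝ := N / (2 * (N - p 0)) with hr
  have key : ∀ n, r ^ n * p 0 ≤ p n := by
    intro n
    induction n with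
    | zero => simp
    | succ n ih =>
      have hlt := (h n).1
      have hlt2 := (h (n+1)).1
      have hpn : p 0 ≤ p n := le_trans (by nlinarith [one_le_pow₀ hr1.le (n := n), hp0pos]) ih
      have hdenn : (0 : ℝ) < 2 * (N - p n) := by linarith
      have hstep : r * p n ≤ p (n + 1) := by
        rw [hrec n, hr, div_mul_eq_mul_div, div_le_div_iff₀ hden0 hdenn]
        have hppos : 0 < p n := by linarith
        nlinarith [mul_nonneg (mul_nonneg hNpos.le hppos.le) (sub_nonneg.mpr hpn)]
      calc r ^ (n+1) * p 0 = r * (r ^ n * p 0) := by ring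
        _ ≤ r * p n := by nlinarith
        _ ≤ p (n + 1) := hstep
  obtain ⟨n, hn⟩ := pow_unbounded_of_one_lt (3 * (N : ℝ) / 4 / p 0) hr1
  have : 3 * (N : ℝ) / 4 < r ^ n * p 0 := by
    rwa [div_lt_iff₀ hp0pos] at hn
  exact absurd ((h n).1) (not_lt.mpr (le_of_lt (lt_of_lt_of_le this (key n))))
end

section
/- Given positive masses M₁₃, M₂₄, M₁₄, M₂₃ > 0 satisfying M₁₃ + M₂₄ = M₁₄ + M₂₃ =: M, the constants u₁ = M₁₃M₁₄/M, u₂ = M₂₃M₂₄/M, u₃ = M₁₃M₂₃/M, u₄ = M₁₄M₂₄/M are the unique positive solution of the system u₁u₂ = u₃u₄, u₁ + u₃ = M₁₃, u₂ + u₄ = M₂₄, u₁ + u₄ = M₁₄, u₂ + u₃ = M₂₃. -/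
theorem stmt12 (M13 M24 M14 M23 M : ℝ)
    (h13 : 0 < M13) (h24 : 0 < M24) (h14 : 0 < M14) (h23 : 0 < M23)
    (hM : M13 + M24 = M) (hM' : M14 + M23 = M) :
    (0 < M13 * M14 / M ∧ 0 < M23 * M24 / M ∧ 0 < M13 * M23 / M ∧ 0 < M14 * M24 / M ∧
      (M13 * M14 / M) * (M23 * M24 / M) = (M13 * M23 / M) * (M14 * M24 / M) ∧
      M13 * M14 / M + M13 * M23 / M = M13 ∧
      M23 * M24 / M + M14 * M24 / M = M24 ∧
      M13 * M14 / M + M14 * M24 / M = M14 ∧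
      M23 * M24 / M + M13 * M23 / M = M23) ∧
    (∀ u₁ u₂ u₃ u₄ : ℝ, 0 < u₁ → 0 < u₂ → 0 < u₃ → 0 < u₄ →
      u₁ * u₂ = u₃ * u₄ → u₁ + u₃ = M13 → u₂ + u₄ = M24 → u₁ + u₄ = M14 → u₂ + u₃ = M23 →
      u₁ = M13 * M14 / M ∧ u₂ = M23 * M24 / M ∧ u₃ = M13 * M23 / M ∧ u₄ = M14 * M24 / M) := by
  have hMpos : 0 < M := by linarith
  have hMne : M ≠ 0 := ne_of_gt hMpos
  refine ⟨⟨by positivity, by positivity, by positivity, by positivity, by ring,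
    by field_simp; linear_combination hM', by field_simp; linear_combination hM',
    by field_simp; linear_combination hM, by field_simp; linear_combination hM⟩, ?_⟩
  intro u₁ u₂ u₃ u₄ h1 h2 h3 h4 hq e13 e24 e14 e23
  have hu1 : u₁ = M13 * M14 / M := by
    field_simp
    nlinarith [hq, e13, e14, e23]
  refine ⟨hu1, ?_, ?_, ?_⟩ <;> field_simp <;> nlinarith [hu1, mul_div_cancel₀ (M13*M14) hMne]
end
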